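/- Let L be a natural number and let V_l, C_l, M_l (for l = 0,…,L) and ε be strictly positive real numbers. If the total variance satisfies ∑_{l=0}^{L} V_l / M_l ≤ ε², then the total cost satisfies ∑_{l=0}^{L} M_l · C_l ≥ ε^{-2} · ( ∑_{l=0}^{L} √(C_l · V_l) )². -/

import Mathlib

/-- MLMC cost lower bound: if the total sampling variance `∑ V l / M l` is at most `ε²`,
then the total cost `∑ M l * C l` is at least `ε⁻² (∑ √(C l V l))²`. -/
theorem mlmc_cost_lower_bound (L : ℕ) (V C M : Fin (L + 1) → ℝ) (ε : ℝ)
    (hV : ∀ l, 0 < V l) (hC : ∀ l, 0 < C l) (hM : ∀ l, 0 < M l) (hε : 0 < ε)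
    (hvar : ∑ l, V l / M l ≤ ε ^ 2) :
    ∑ l, M l * C l ≥ (ε ^ 2)⁻¹ * (∑ l, Real.sqrt (C l * V l)) ^ 2 := by
  have hcs := Finset.sum_sq_le_sum_mul_sum_of_sq_eq_mul (Finset.univ : Finset (Fin (L + 1)))
    (r := fun l => Real.sqrt (C l * V l)) (f := fun l => M l * C l) (g := fun l => V l / M l)
    (fun l _ => (mul_pos (hM l) (hC l)).le)
    (fun l _ => (div_pos (hV l) (hM l)).le)
    (fun l _ => by
      rw [Real.sq_sqrt (mul_pos (hC l) (hV l)).le]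
      field_simp [(hM l).ne'])
  have h2 : (∑ l, Real.sqrt (C l * V l)) ^ 2 ≤ (∑ l, M l * C l) * ε ^ 2 :=
    hcs.trans (by
      gcongr
      exact Finset.sum_nonneg fun l _ => (mul_pos (hM l) (hC l)).le)
  rw [ge_iff_le, inv_mul_le_iff₀ (by positivity), mul_comm]
  exact h2
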